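/- Let k ∈ [n-1] and let u, v, w ∈ Sₙ be such that w(1) > w(a) > w(c) for indices 1 < a, 1 ≤ c with v = w·t_{1,a}, u = v·t_{1,c}, ℓ(v) = ℓ(w) - 1, ℓ(u) = ℓ(v) - 1, and u ⋖ₖ v (i.e., the cover v → u swaps positions 1 ≤ k < c). Assume w(k+1) > w(k+2) > ⋯ > w(n) and k < a. Then w(a) = w(c) + 1 and a = c - 1. -/

import Mathlib

/-- Number of inversions of a permutation of `Fin n`. -/
def invCount {n : ℕ} (w : Equiv.Perm (Fin n)) : ℕ :=
  (Finset.univ.filter (fun p : Fin n × Fin n => p.1 < p.2 ∧ w p.2 < w p.1)).card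

/-- `w ∈ Sₙ^{k↘}` (1-indexed: `w(k+1) > ⋯ > w(n)`); positions are 0-indexed here. -/
def DescFrom (n k : ℕ) (w : Equiv.Perm (Fin n)) : Prop :=
  ∀ p q : Fin n, k ≤ (p : ℕ) → p < q → w q < w p

/-- `u ⋖ₖ w` : cover in the `k`-Bruhat order (1-indexed `k`; positions 0-indexed,
so `i ≤ k < j` becomes `↑i < k ≤ ↑j`). -/
def kCover (n k : ℕ) (u w : Equiv.Perm (Fin n)) : Prop :=
  ∃ i j : Fin n, (i : ℕ) < k ∧ k ≤ (j : ℕ) ∧ u = w * Equiv.swap i j ∧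
    invCount w = invCount u + 1

/-- An increasing `k`-chain `v 0 ⋖ₖ v 1 ⋖ₖ ⋯ ⋖ₖ v d`, with
`v m = v (m+1) * swap (a m) (b m)` and strictly increasing smaller swapped values
`v m (a m)`. -/
def IsIncKChain (n k : ℕ) {d : ℕ} (v : Fin (d + 1) → Equiv.Perm (Fin n))
    (a b : Fin d → Fin n) : Prop :=
  (∀ m : Fin d, (a m : ℕ) < k ∧ k ≤ (b m : ℕ) ∧
      v m.castSucc = v m.succ * Equiv.swap (a m) (b m) ∧
      invCount (v m.succ) = invCount (v m.castSucc) + 1) ∧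
  ∀ m m' : Fin d, m < m' → v m.castSucc (a m) < v m'.castSucc (a m')

/-- There is an increasing `k`-chain of length `d` (number of covers) from `u` to `w`. -/
def ExIncKChainLen (n k d : ℕ) (u w : Equiv.Perm (Fin n)) : Prop :=
  ∃ (v : Fin (d + 1) → Equiv.Perm (Fin n)) (a b : Fin d → Fin n),
    IsIncKChain n k v a b ∧ v 0 = u ∧ v (Fin.last d) = w

lemma invCount_key {n : ℕ} (v : Equiv.Perm (Fin n)) (i j p : Fin n)
    (hij : i < j) (hip : i < p) (hpj : p < j)
    (hvji : v j < v i) (hp1 : v j < v p) (hp2 : v p < v i) :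
    invCount (v * Equiv.swap i j) + 2 ≤ invCount v := by
  classical
  set s := Equiv.swap i j with hs
  have hss : ∀ x, s (s x) = x := fun x => Equiv.swap_apply_self i j x
  have hsi : s i = j := Equiv.swap_apply_left i j
  have hsj : s j = i := Equiv.swap_apply_right i j
  have hsne : ∀ x, x ≠ i → x ≠ j → s x = x := fun x h1 h2 => Equiv.swap_apply_of_ne_of_ne h1 h2
  set A : Finset (Fin n × Fin n) :=
    Finset.univ.filter (fun q : Fin n × Fin n => s q.1 < s q.2 ∧ v q.2 < v q.1) with hAdef
  set B : Finset (Fin n × Fin n) :=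
    Finset.univ.filter (fun q : Fin n × Fin n => q.1 < q.2 ∧ v q.2 < v q.1) with hBdef
  have hA : invCount (v * s) = A.card := by
    unfold invCount
    refine Finset.card_nbij' (fun q => (s q.1, s q.2)) (fun q => (s q.1, s q.2)) ?_ ?_ ?_ ?_
    · intro q hq
      have hq := (Finset.mem_filter.mp (Finset.mem_coe.mp hq)).2
      show (s q.1, s q.2) ∈ A
      rw [hAdef, Finset.mem_filter]
      refine ⟨Finset.mem_univ _, ?_, hq.2⟩
      rw [hss, hss]; exact hq.1
    · intro q hq
      change q ∈ A at hq
      rw [hAdef, Finset.mem_filter] at hq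
      refine Finset.mem_coe.mpr (Finset.mem_filter.mpr ⟨Finset.mem_univ _, hq.2.1, ?_⟩)
      show v (s (s q.2)) < v (s (s q.1))
      rw [hss, hss]; exact hq.2.2
    · intro q _; simp [hss]
    · intro q _; simp [hss]
  -- characterization of A \ B
  have char : ∀ q ∈ A \ B, (q.2 = i ∧ i < q.1 ∧ q.1 < j) ∨ (q.1 = j ∧ i < q.2 ∧ q.2 < j) := by
    intro q hq
    rw [Finset.mem_sdiff, hAdef, hBdef, Finset.mem_filter, Finset.mem_filter] at hq
    obtain ⟨⟨-, hA1, hA2⟩, hnB⟩ := hq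
    have hne : q.1 ≠ q.2 := fun h => absurd hA1 (by rw [h]; exact lt_irrefl _)
    have h21 : q.2 < q.1 := by
      rcases lt_or_gt_of_ne hne with h | h
      · exact absurd ⟨Finset.mem_univ q, h, hA2⟩ hnB
      · exact h
    rcases eq_or_ne q.2 i with h2i | h2i
    · rcases eq_or_ne q.1 j with h1j | h1j
      · exact absurd hA2 (by rw [h2i, h1j]; exact not_lt.2 (le_of_lt hvji))
      · have h1i : q.1 ≠ i := fun h => absurd h21 (by rw [h, h2i]; exact lt_irrefl _)
        rw [hsne q.1 h1i h1j, h2i, hsi] at hA1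
        exact Or.inl ⟨h2i, h2i ▸ h21, hA1⟩
    · rcases eq_or_ne q.2 j with h2j | h2j
      · have hj1 : j < q.1 := by rw [← h2j]; exact h21
        have h1i : q.1 ≠ i := by
          intro h; rw [h] at hj1; exact absurd (lt_trans hij hj1) (lt_irrefl _)
        have h1j : q.1 ≠ j := ne_of_gt hj1
        rw [hsne q.1 h1i h1j, h2j, hsj] at hA1
        exact absurd (lt_trans hij (lt_trans hj1 hA1)) (lt_irrefl _)
      · rw [hsne q.2 h2i h2j] at hA1
        rcases eq_or_ne q.1 i with h1i | h1i
        · rw [h1i, hsi] at hA1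
          exact absurd (lt_trans hA1 (h1i ▸ h21)) (not_lt.2 (le_of_lt hij))
        · rcases eq_or_ne q.1 j with h1j | h1j
          · rw [h1j, hsj] at hA1
            exact Or.inr ⟨h1j, hA1, h1j ▸ h21⟩
          · rw [hsne q.1 h1i h1j] at hA1
            exact absurd hA1 (not_lt.2 (le_of_lt h21))
  set E : Finset (Fin n × Fin n) := {(i, p), (p, j)} with hEdef
  have hpi : p ≠ i := ne_of_gt hip
  have hEcard : E.card = 2 := by
    rw [hEdef, Finset.card_insert_of_notMem (by simp [hpi.symm]), Finset.card_singleton]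
  have hEsub : E ⊆ B \ A := by
    intro q hq
    rw [hEdef] at hq
    simp only [Finset.mem_insert, Finset.mem_singleton] at hq
    rw [Finset.mem_sdiff, hBdef, hAdef, Finset.mem_filter, Finset.mem_filter]
    rcases hq with rfl | rfl
    · refine ⟨⟨Finset.mem_univ _, hip, hp2⟩, ?_⟩
      simp only [Finset.mem_univ, true_and, not_and]
      intro h
      rw [hsi, hsne p hpi (ne_of_lt hpj)] at h
      exact absurd (lt_trans hpj h) (lt_irrefl _)
    · refine ⟨⟨Finset.mem_univ _, hpj, hp1⟩, ?_⟩
      simp only [Finset.mem_univ, true_and, not_and]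
      intro h
      rw [hsj, hsne p hpi (ne_of_lt hpj)] at h
      exact absurd (lt_trans hip h) (lt_irrefl _)
  -- the injection from A \ B into (B \ A) \ E
  set f : Fin n × Fin n → Fin n × Fin n :=
    fun q => if q.2 = i then (q.1, j) else (i, q.2) with hfdef
  have hmaps : ∀ q ∈ A \ B, f q ∈ (B \ A) \ E := by
    intro q hq
    have hA2 : v q.2 < v q.1 := by
      rw [Finset.mem_sdiff, hAdef, Finset.mem_filter] at hq
      exact hq.1.2.2
    rcases char q hq with ⟨h2i, hi1, h1j⟩ | ⟨h1j, hi2, h2j⟩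
    · have hfq : f q = (q.1, j) := by rw [hfdef]; simp [h2i]
      rw [hfq, Finset.mem_sdiff, Finset.mem_sdiff, hBdef, hAdef,
        Finset.mem_filter, Finset.mem_filter]
      have hv1 : v j < v q.1 := lt_trans hvji (h2i ▸ hA2)
      refine ⟨⟨⟨Finset.mem_univ _, h1j, hv1⟩, ?_⟩, ?_⟩
      · simp only [Finset.mem_univ, true_and, not_and]
        intro h
        rw [hsj, hsne q.1 (ne_of_gt hi1) (ne_of_lt h1j)] at h
        exact absurd (lt_trans hi1 h) (lt_irrefl _)
      · have hne1 : (q.1, j) ≠ (i, p) := by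
          intro h
          have h2 : j = p := congrArg Prod.snd h
          rw [h2] at hpj; exact absurd hpj (lt_irrefl _)
        have hne2 : (q.1, j) ≠ (p, j) := by
          intro h
          have h1 : q.1 = p := congrArg Prod.fst h
          have hvq : v i < v q.1 := h2i ▸ hA2
          rw [h1] at hvq
          exact absurd (lt_trans hvq hp2) (lt_irrefl _)
        rw [hEdef]
        simp only [Finset.mem_insert, Finset.mem_singleton, hne1, hne2, or_self,
          not_false_eq_true]
    · have h2ine : q.2 ≠ i := ne_of_gt hi2
      have hfq : f q = (i, q.2) := by rw [hfdef]; simp [h2ine]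
      rw [hfq, Finset.mem_sdiff, Finset.mem_sdiff, hBdef, hAdef,
        Finset.mem_filter, Finset.mem_filter]
      have hv2 : v q.2 < v i := lt_trans (h1j ▸ hA2) hvji
      refine ⟨⟨⟨Finset.mem_univ _, hi2, hv2⟩, ?_⟩, ?_⟩
      · simp only [Finset.mem_univ, true_and, not_and]
        intro h
        rw [hsi, hsne q.2 h2ine (ne_of_lt h2j)] at h
        exact absurd (lt_trans h2j h) (lt_irrefl _)
      · have hne1 : (i, q.2) ≠ (i, p) := by
          intro h
          have h2 : q.2 = p := congrArg Prod.snd h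
          have hvq : v q.2 < v j := h1j ▸ hA2
          rw [h2] at hvq
          exact absurd (lt_trans hp1 hvq) (lt_irrefl _)
        have hne2 : (i, q.2) ≠ (p, j) := by
          intro h
          have h1 : i = p := congrArg Prod.fst h
          rw [← h1] at hip; exact absurd hip (lt_irrefl _)
        rw [hEdef]
        simp only [Finset.mem_insert, Finset.mem_singleton, hne1, hne2, or_self,
          not_false_eq_true]
  have hinj : Set.InjOn f (A \ B : Finset (Fin n × Fin n)) := by
    intro q hq q' hq' hfe
    rw [Finset.mem_coe] at hq hq'
    rcases char q hq with ⟨h2i, hi1, h1j⟩ | ⟨h1j, hi2, h2j⟩ <;>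
      rcases char q' hq' with ⟨h2i', hi1', h1j'⟩ | ⟨h1j', hi2', h2j'⟩
    · rw [hfdef] at hfe
      simp only [h2i, h2i', if_pos] at hfe
      have := Prod.ext_iff.mp hfe
      exact Prod.ext this.1 (h2i.trans h2i'.symm)
    · rw [hfdef] at hfe
      simp only [h2i, if_pos, ne_of_gt hi2', if_neg] at hfe
      have := Prod.ext_iff.mp hfe
      exact absurd (this.1 ▸ hi1) (lt_irrefl _)
    · rw [hfdef] at hfe
      simp only [h2i', if_pos, ne_of_gt hi2, if_neg] at hfe
      have := Prod.ext_iff.mp hfe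
      exact absurd (this.1.symm ▸ hi1') (lt_irrefl _)
    · rw [hfdef] at hfe
      simp only [ne_of_gt hi2, ne_of_gt hi2', if_neg] at hfe
      have := Prod.ext_iff.mp hfe
      exact Prod.ext (h1j.trans h1j'.symm) this.2
  have hle : (A \ B).card ≤ ((B \ A) \ E).card :=
    Finset.card_le_card_of_injOn f hmaps hinj
  have h1 : ((B \ A) \ E).card = (B \ A).card - E.card :=
    Finset.card_sdiff_of_subset hEsub
  have h2 : E.card ≤ (B \ A).card := Finset.card_le_card hEsub
  have hAB : (A ∩ B).card + (A \ B).card = A.card := Finset.card_inter_add_card_sdiff A B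
  have hBA : (B ∩ A).card + (B \ A).card = B.card := Finset.card_inter_add_card_sdiff B A
  have hcomm : (A ∩ B).card = (B ∩ A).card := by rw [Finset.inter_comm]
  have hBcard : invCount v = B.card := rfl
  rw [hA, hBcard]
  omega

theorem stmt8 (n k : ℕ) (hn : 0 < n) (hk1 : 1 ≤ k) (hk2 : k ≤ n - 1)
    (w : Equiv.Perm (Fin n)) (a c : Fin n)
    (ha : 0 < (a : ℕ)) (hka : k ≤ (a : ℕ)) (hkc : k ≤ (c : ℕ))
    (hw : DescFrom n k w)
    (hv1 : w c < w a) (hv2 : w a < w ⟨0, hn⟩)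
    (hcov1 : invCount w = invCount (w * Equiv.swap ⟨0, hn⟩ a) + 1)
    (hcov2 : invCount (w * Equiv.swap ⟨0, hn⟩ a)
      = invCount (w * Equiv.swap ⟨0, hn⟩ a * Equiv.swap ⟨0, hn⟩ c) + 1) :
    (w a : ℕ) = (w c : ℕ) + 1 ∧ (a : ℕ) + 1 = (c : ℕ) := by
  classical
  set z : Fin n := ⟨0, hn⟩ with hz
  set v : Equiv.Perm (Fin n) := w * Equiv.swap z a with hvdef
  have haz : a ≠ z := by
    intro h; rw [h] at ha; exact absurd ha (lt_irrefl _)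
  have hcz : c ≠ z := by
    intro h
    have : (c : ℕ) = 0 := by rw [h]
    omega
  have hac : a ≠ c := by
    intro h; rw [h] at hv1; exact absurd hv1 (lt_irrefl _)
  have hvz : v z = w a := by
    rw [hvdef, Equiv.Perm.mul_apply, Equiv.swap_apply_left]
  have hvc : v c = w c := by
    rw [hvdef, Equiv.Perm.mul_apply, Equiv.swap_apply_of_ne_of_ne hcz (Ne.symm hac)]
  have hzc : z < c := by
    rw [Fin.lt_def]
    show 0 < (c : ℕ); omega
  have hvzc : v c < v z := by rw [hvz, hvc]; exact hv1
  -- a < c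
  have haltc : (a : ℕ) < (c : ℕ) := by
    rcases lt_trichotomy ((a : ℕ)) ((c : ℕ)) with h | h | h
    · exact h
    · exact absurd (Fin.ext h) hac
    · have := hw c a hkc (by rw [Fin.lt_def]; exact h)
      exact absurd (lt_trans this hv1) (lt_irrefl _)
  -- part 2 : a + 1 = c
  have hpart2 : (a : ℕ) + 1 = (c : ℕ) := by
    by_contra hne
    have hlt : (a : ℕ) + 1 < (c : ℕ) := by omega
    set P : Fin n := ⟨(a : ℕ) + 1, by omega⟩ with hP
    have hPz : P ≠ z := by
      intro h
      have : (a : ℕ) + 1 = 0 := by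
        have := congrArg Fin.val h; simpa using this
      omega
    have hPa : P ≠ a := by
      intro h
      have := congrArg Fin.val h; simp [hP] at this
    have hvP : v P = w P := by
      rw [hvdef, Equiv.Perm.mul_apply, Equiv.swap_apply_of_ne_of_ne hPz hPa]
    have haP : a < P := by rw [Fin.lt_def]; simp [hP]
    have hPc : P < c := by rw [Fin.lt_def]; simpa [hP] using hlt
    have hwaP : w P < w a := hw a P hka haP
    have hwPc : w c < w P := hw P c (by simp [hP]; omega) hPc
    have hzP : z < P := by rw [Fin.lt_def]; show 0 < (a : ℕ) + 1; omega
    have := invCount_key v z c P hzc hzP hPc hvzc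
      (by rw [hvc, hvP]; exact hwPc) (by rw [hvP, hvz]; exact hwaP)
    omega
  -- part 1 : w a = w c + 1
  have hwcwa : (w c : ℕ) < (w a : ℕ) := hv1
  refine ⟨?_, hpart2⟩
  by_contra hne
  have hlt : (w c : ℕ) + 1 < (w a : ℕ) := by omega
  set m : Fin n := ⟨(w c : ℕ) + 1, by omega⟩ with hm
  set P : Fin n := w.symm m with hPdef
  have hwP : w P = m := w.apply_symm_apply m
  have hwPm : (w P : ℕ) = (w c : ℕ) + 1 := by rw [hwP]
  have hPc : P ≠ c := by
    intro h
    rw [h] at hwPm; omega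
  have hPa : P ≠ a := by
    intro h
    rw [h] at hwPm; omega
  have hPz : P ≠ z := by
    intro h
    rw [h] at hwPm
    have : (w a : ℕ) < (w z : ℕ) := hv2
    omega
  have hPk : (P : ℕ) < k := by
    by_contra hge
    push_neg at hge
    rcases lt_trichotomy ((P : ℕ)) ((a : ℕ)) with h | h | h
    · have := hw P a hge (by rw [Fin.lt_def]; exact h)
      have : (w a : ℕ) < (w P : ℕ) := this
      omega
    · exact hPa (Fin.ext h)
    · have hcP : (c : ℕ) < (P : ℕ) := by
        rcases lt_trichotomy ((c : ℕ)) ((P : ℕ)) with h' | h' | h'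
        · exact h'
        · exact absurd (Fin.ext h'.symm) hPc
        · omega
      have := hw c P hkc (by rw [Fin.lt_def]; exact hcP)
      have : (w P : ℕ) < (w c : ℕ) := this
      omega
  have hzP : z < P := by
    rw [Fin.lt_def]
    show 0 < (P : ℕ)
    rcases Nat.eq_zero_or_pos (P : ℕ) with h | h
    · exact absurd (Fin.ext h) hPz
    · exact h
  have hPltc : P < c := by rw [Fin.lt_def]; omega
  have hvP : v P = w P := by
    rw [hvdef, Equiv.Perm.mul_apply, Equiv.swap_apply_of_ne_of_ne hPz hPa]
  have := invCount_key v z c P hzc hzP hPltc hvzc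
    (by rw [hvc, hvP, Fin.lt_def]; omega)
    (by rw [hvP, hvz, Fin.lt_def]; omega)
  omega
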